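/- There is no non-consecutive Latin square of order n for 2 ≤ n ≤ 4. -/
import Mathlib


/-- An `n × n` Latin square with entries in `{1, …, n}`. -/
def latin (n : ℕ) (M : Fin n → Fin n → ℕ) : Prop :=
  (∀ i j, M i j ∈ Finset.Icc 1 n) ∧
  (∀ i, Function.Injective fun j => M i j) ∧
  (∀ j, Function.Injective fun i => M i j)

/-- Two cells are orthogonally adjacent. -/
def orthAdj (n : ℕ) (p q : Fin n × Fin n) : Prop :=
  (p.1 = q.1 ∧ (p.2.val + 1 = q.2.val ∨ q.2.val + 1 = p.2.val)) ∨
  (p.2 = q.2 ∧ (p.1.val + 1 = q.1.val ∨ q.1.val + 1 = p.1.val))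

/-- Two cells are a king's move apart (orthogonally or diagonally adjacent). -/
def kingAdj (n : ℕ) (p q : Fin n × Fin n) : Prop :=
  p ≠ q ∧ ((p.1.val : ℤ) - q.1.val).natAbs ≤ 1 ∧ ((p.2.val : ℤ) - q.2.val).natAbs ≤ 1

/-- Two cells are a knight's move apart. -/
def knightAdj (n : ℕ) (p q : Fin n × Fin n) : Prop :=
  (((p.1.val : ℤ) - q.1.val).natAbs = 1 ∧ ((p.2.val : ℤ) - q.2.val).natAbs = 2) ∨
  (((p.1.val : ℤ) - q.1.val).natAbs = 2 ∧ ((p.2.val : ℤ) - q.2.val).natAbs = 1)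

/-- Two cells are a bishop's move apart: on a common diagonal, at nonzero distance. -/
def bishopMove (n : ℕ) (p q : Fin n × Fin n) : Prop :=
  ((p.1.val : ℤ) - q.1.val).natAbs = ((p.2.val : ℤ) - q.2.val).natAbs ∧ p.1 ≠ q.1

/-- Two cells are orthogonally adjacent on the torus (wrapping around). -/
def torAdj (n : ℕ) (p q : Fin n × Fin n) : Prop :=
  p ≠ q ∧
    ((p.1 = q.1 ∧ ((p.2.val + 1) % n = q.2.val ∨ (q.2.val + 1) % n = p.2.val)) ∨
     (p.2 = q.2 ∧ ((p.1.val + 1) % n = q.1.val ∨ (q.1.val + 1) % n = p.1.val)))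

/-- Two values differ by exactly 1. -/
def diffOne (a b : ℕ) : Prop := ((a : ℤ) - (b : ℤ)).natAbs = 1

/-- There is no non-consecutive Latin square of order `n` for `2 ≤ n ≤ 4`. -/
theorem stmt2 (n : ℕ) (h2 : 2 ≤ n) (h4 : n ≤ 4) :
    ¬ ∃ M : Fin n → Fin n → ℕ, latin n M ∧
      ∀ p q : Fin n × Fin n, orthAdj n p q → ¬ diffOne (M p.1 p.2) (M q.1 q.2) := by
  rintro ⟨M, ⟨hbd, hrow, hcol⟩, hadj⟩
  interval_cases n
  · have h01 := hadj (0,0) (0,1) (Or.inl ⟨rfl, Or.inl rfl⟩)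
    have b0 := hbd 0 0; have b1 := hbd 0 1
    have hne : M 0 0 ≠ M 0 1 := fun h => absurd (hrow 0 h) (by decide)
    simp only [Finset.mem_Icc] at b0 b1
    simp only [diffOne] at h01
    omega
  · have h01 := hadj (0,0) (0,1) (Or.inl ⟨rfl, Or.inl rfl⟩)
    have h12 := hadj (0,1) (0,2) (Or.inl ⟨rfl, Or.inl rfl⟩)
    have b0 := hbd 0 0; have b1 := hbd 0 1; have b2 := hbd 0 2
    have e01 : M 0 0 ≠ M 0 1 := fun h => absurd (hrow 0 h) (by decide)
    have e02 : M 0 0 ≠ M 0 2 := fun h => absurd (hrow 0 h) (by decide)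
    have e12 : M 0 1 ≠ M 0 2 := fun h => absurd (hrow 0 h) (by decide)
    simp only [Finset.mem_Icc] at b0 b1 b2
    simp only [diffOne] at h01 h12
    omega
  · have key : ∀ i : Fin 4, M i 0 = 2 ∨ M i 0 = 3 := by
      intro i
      have h01 := hadj (i,0) (i,1) (Or.inl ⟨rfl, Or.inl rfl⟩)
      have h12 := hadj (i,1) (i,2) (Or.inl ⟨rfl, Or.inl rfl⟩)
      have h23 := hadj (i,2) (i,3) (Or.inl ⟨rfl, Or.inl rfl⟩)
      have b0 := hbd i 0; have b1 := hbd i 1; have b2 := hbd i 2; have b3 := hbd i 3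
      have e01 : M i 0 ≠ M i 1 := fun h => absurd (hrow i h) (by decide)
      have e02 : M i 0 ≠ M i 2 := fun h => absurd (hrow i h) (by decide)
      have e03 : M i 0 ≠ M i 3 := fun h => absurd (hrow i h) (by decide)
      have e12 : M i 1 ≠ M i 2 := fun h => absurd (hrow i h) (by decide)
      have e13 : M i 1 ≠ M i 3 := fun h => absurd (hrow i h) (by decide)
      have e23 : M i 2 ≠ M i 3 := fun h => absurd (hrow i h) (by decide)
      simp only [Finset.mem_Icc] at b0 b1 b2 b3
      simp only [diffOne] at h01 h12 h23
      omega
    have k0 := key 0; have k1 := key 1; have k2 := key 2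
    have c01 : M 0 0 ≠ M 1 0 := fun h => absurd (hcol 0 h) (by decide)
    have c02 : M 0 0 ≠ M 2 0 := fun h => absurd (hcol 0 h) (by decide)
    have c12 : M 1 0 ≠ M 2 0 := fun h => absurd (hcol 0 h) (by decide)
    omega
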